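/- Let ρ > 0 and let S be an open convex subset of ℝ² contained in ℝ × (0, +∞). If S meets both (-∞, -ρ) × ℝ and (ρ, +∞) × ℝ, then there exist s ∈ ℝ, b > 0, and a function f : [-ρ, ρ] → ℝ such that the set ∂S ∩ {(x,y) : x ∈ [-ρ, ρ] and y < s·x + b} equals the graph of f. -/

import Mathlib

theorem stmt_2 (ρ : ℝ) (hρ : 0 < ρ) (S : Set (ℝ × ℝ))
    (hopen : IsOpen S) (hconv : Convex ℝ S)
    (hsub : S ⊆ {p : ℝ × ℝ | 0 < p.2})
    (hleft : (S ∩ {p : ℝ × ℝ | p.1 < -ρ}).Nonempty)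
    (hright : (S ∩ {p : ℝ × ℝ | ρ < p.1}).Nonempty) :
    ∃ (s b : ℝ) (f : ℝ → ℝ), 0 < b ∧
      frontier S ∩ {p : ℝ × ℝ | p.1 ∈ Set.Icc (-ρ) ρ ∧ p.2 < s * p.1 + b}
        = (fun x => (x, f x)) '' Set.Icc (-ρ) ρ := by
  obtain ⟨⟨x₁, y₁⟩, hp, hx₁⟩ := hleft
  obtain ⟨⟨x₂, y₂⟩, hq, hx₂⟩ := hright
  simp only [Set.mem_setOf_eq] at hx₁ hx₂
  have hx12 : (0:ℝ) < x₂ - x₁ := by linarith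
  set s : ℝ := (y₂ - y₁) / (x₂ - x₁) with hs
  set b : ℝ := y₁ - s * x₁ with hbdef
  set L : ℝ → ℝ := fun x => s * x + b with hLdef
  -- the chord lies in S over [-ρ, ρ]
  have hLS : ∀ x ∈ Set.Icc (-ρ) ρ, (x, L x) ∈ S := by
    rintro x ⟨hxl, hxr⟩
    set t : ℝ := (x - x₁) / (x₂ - x₁) with ht
    have ht0 : 0 ≤ t := div_nonneg (by linarith) hx12.le
    have ht1 : t ≤ 1 := by rw [div_le_one hx12]; linarith
    have hmem := hconv hp hq (by linarith : (0:ℝ) ≤ 1 - t) ht0 (by ring)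
    have heq : (1 - t) • ((x₁, y₁) : ℝ × ℝ) + t • ((x₂, y₂) : ℝ × ℝ) = (x, L x) := by
      simp only [Prod.smul_mk, Prod.mk_add_mk, smul_eq_mul, Prod.mk.injEq, hLdef]
      constructor
      · rw [ht]
        field_simp
        ring
      · rw [hbdef, hs, ht]
        field_simp
        ring
    rwa [heq] at hmem
  have hb_pos : 0 < b := by
    have h0 : (0:ℝ) ∈ Set.Icc (-ρ) ρ := ⟨by linarith, by linarith⟩
    have := hsub (hLS 0 h0)
    simpa [hLdef] using this
  -- slices
  set A : ℝ → Set ℝ := fun x => (Prod.mk x) ⁻¹' S with hA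
  have hAopen : ∀ x, IsOpen (A x) := fun x => hopen.preimage (Continuous.prodMk_right x)
  have hAbdd : ∀ x, BddBelow (A x) := fun x => ⟨0, fun y hy => (hsub hy).le⟩
  have hAconv : ∀ x, Convex ℝ (A x) := by
    intro x y1 h1 y2 h2 a c ha hc hac
    have := hconv (x := (x, y1)) (y := (x, y2)) h1 h2 ha hc hac
    have heq : a • ((x, y1) : ℝ × ℝ) + c • ((x, y2) : ℝ × ℝ) = (x, a * y1 + c * y2) := by
      simp only [Prod.smul_mk, Prod.mk_add_mk, smul_eq_mul, Prod.mk.injEq]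
      exact ⟨by linear_combination x * hac, trivial⟩
    rw [heq] at this
    exact this
  set f : ℝ → ℝ := fun x => sInf (A x) with hf
  have hAne : ∀ x ∈ Set.Icc (-ρ) ρ, (A x).Nonempty := fun x hx => ⟨L x, hLS x hx⟩
  -- f x < L x
  have key1 : ∀ x ∈ Set.Icc (-ρ) ρ, f x < L x := by
    intro x hx
    obtain ⟨ε, hε, hball⟩ := Metric.isOpen_iff.1 (hAopen x) _ (hLS x hx)
    have hmem : L x - ε / 2 ∈ A x := by
      apply hball
      rw [Metric.mem_ball, Real.dist_eq]
      have : L x - ε / 2 - L x = -(ε / 2) := by ring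
      rw [this, abs_neg, abs_of_pos (by linarith)]
      linarith
    have h2 : f x ≤ L x - ε / 2 := csInf_le (hAbdd x) hmem
    have h3 : L x - ε / 2 < L x := by linarith
    exact lt_of_le_of_lt h2 h3
  -- points strictly between f x and L x are in S
  have key2 : ∀ x ∈ Set.Icc (-ρ) ρ, ∀ y, f x < y → y ≤ L x → (x, y) ∈ S := by
    intro x hx y hy1 hy2
    obtain ⟨y', hy', hy'lt⟩ := exists_lt_of_csInf_lt (hAne x hx) hy1
    have hord := (hAconv x).ordConnected
    exact hord.out hy' (hLS x hx) ⟨hy'lt.le, hy2⟩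
  -- the point (x, f x) is in the closure of S
  have key3 : ∀ x ∈ Set.Icc (-ρ) ρ, (x, f x) ∈ closure S := by
    intro x hx
    have h1 : f x ∈ closure (A x) := csInf_mem_closure (hAne x hx) (hAbdd x)
    have h2 : closure (A x) ⊆ (Prod.mk x) ⁻¹' closure S :=
      (Continuous.prodMk_right x).closure_preimage_subset S
    exact h2 h1
  -- (x, f x) is not in S
  have key4 : ∀ x, (x, f x) ∉ S := by
    intro x hmem
    obtain ⟨ε, hε, hball⟩ := Metric.isOpen_iff.1 (hAopen x) _ hmem
    have hmem2 : f x - ε / 2 ∈ A x := by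
      apply hball
      rw [Metric.mem_ball, Real.dist_eq]
      have : f x - ε / 2 - f x = -(ε / 2) := by ring
      rw [this, abs_neg, abs_of_pos (by linarith)]
      linarith
    have h2 : f x ≤ f x - ε / 2 := csInf_le (hAbdd x) hmem2
    linarith
  -- points strictly below (x, f x) are not in the closure of S
  have arith : ∀ u v w : ℝ, w < v → v < u →
      0 < (v - w) / (2 * (u - w)) ∧ (v - w) / (2 * (u - w)) ≤ 1 ∧
      w + (v - w) / (2 * (u - w)) * (u - w) < v := by
    intro u v w h1 h2
    have hu : (0:ℝ) < u - w := by linarith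
    have hne : u - w ≠ 0 := ne_of_gt hu
    refine ⟨div_pos (by linarith) (by linarith), ?_, ?_⟩
    · rw [div_le_one (by linarith)]
      linarith
    · have hq : (v - w) / (2 * (u - w)) * (u - w) = (v - w) / 2 := by
        field_simp
      rw [hq]
      linarith
  have key5 : ∀ x ∈ Set.Icc (-ρ) ρ, ∀ y, y < f x → (x, y) ∉ closure S := by
    intro x hx y hy hcl
    have hfL : f x < L x := key1 x hx
    obtain ⟨ha0, ha1, hlt⟩ := arith (L x) (f x) y hy hfL
    have hint : (x, L x) ∈ interior S := by
      rw [hopen.interior_eq]; exact hLS x hx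
    have hcomb := hconv.combo_interior_closure_mem_interior hint hcl ha0
      (by linarith : (0:ℝ) ≤ 1 - (f x - y) / (2 * (L x - y))) (by ring)
    rw [hopen.interior_eq] at hcomb
    have heq : ((f x - y) / (2 * (L x - y))) • ((x, L x) : ℝ × ℝ)
        + (1 - (f x - y) / (2 * (L x - y))) • ((x, y) : ℝ × ℝ)
        = (x, y + (f x - y) / (2 * (L x - y)) * (L x - y)) := by
      simp only [Prod.smul_mk, Prod.mk_add_mk, smul_eq_mul, Prod.mk.injEq]
      constructor <;> ring
    rw [heq] at hcomb
    have hle : f x ≤ y + (f x - y) / (2 * (L x - y)) * (L x - y) :=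
      csInf_le (hAbdd x) hcomb
    linarith
  refine ⟨s, b, f, hb_pos, ?_⟩
  ext ⟨x, y⟩
  simp only [Set.mem_inter_iff, Set.mem_setOf_eq, hopen.frontier_eq, Set.mem_diff,
    Set.mem_image, Prod.mk.injEq]
  constructor
  · rintro ⟨⟨hcl, hnS⟩, hxI, hylt⟩
    refine ⟨x, hxI, rfl, ?_⟩
    rcases lt_trichotomy y (f x) with h | h | h
    · exact absurd hcl (key5 x hxI y h)
    · exact h.symm
    · exact absurd (key2 x hxI y h hylt.le) hnS
  · rintro ⟨x', hx', rfl, rfl⟩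
    exact ⟨⟨key3 x' hx', key4 x'⟩, hx', key1 x' hx'⟩
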